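/- Let (F, δ) be a differential field of characteristic 0 whose algebraic closure F^alg (with the unique extended derivation) has the same field of constants as F. Suppose that for all x ∈ F and all positive integers n, δ(x) = n·x implies x = 0. Then for all α ∈ F^alg and all positive integers n, δ(α) = n·α implies α = 0. -/
import Mathlib

open Polynomial Finset

/-- If a differential field `(F, δ)` of characteristic 0 has the same constants as its
algebraic closure (with the unique extended derivation) and `δx = n·x` has only the
trivial solution in `F` for every positive integer `n`, then the same holds in the
algebraic closure. -/
theorem no_nontrivial_solution_algebraicClosure {F : Type*} [Field F] [CharZero F]
    (δ : Derivation ℤ F F)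
    (d : Derivation ℤ (AlgebraicClosure F) (AlgebraicClosure F))
    (hext : ∀ a : F, d (algebraMap F (AlgebraicClosure F) a) =
      algebraMap F (AlgebraicClosure F) (δ a))
    (hconst : ∀ x : AlgebraicClosure F, d x = 0 →
      ∃ c : F, algebraMap F (AlgebraicClosure F) c = x)
    (hF : ∀ (x : F) (n : ℕ), 0 < n → δ x = n • x → x = 0) :
    ∀ (α : AlgebraicClosure F) (n : ℕ), 0 < n → d α = n • α → α = 0 := by
  intro α n hn hα
  have hint : IsIntegral F α := Algebra.IsIntegral.isIntegral α
  set p := minpoly F α with hp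
  set m := p.natDegree with hm
  have hm1 : 0 < m := minpoly.natDegree_pos hint
  have hmonic : p.Monic := minpoly.monic hint
  have hpow : ∀ k : ℕ, d (α ^ k) = (k * n) • α ^ k := by
    intro k
    cases k with
    | zero => simp
    | succ k =>
      rw [Derivation.leibniz_pow, hα, Nat.add_sub_cancel]
      simp only [smul_eq_mul, mul_smul_comm, smul_smul, ← pow_succ]
  have hterm : ∀ k : ℕ, d (p.coeff k • α ^ k)
      = algebraMap F (AlgebraicClosure F) (δ (p.coeff k)) * α ^ k
        + (k * n) • (algebraMap F (AlgebraicClosure F) (p.coeff k) * α ^ k) := by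
    intro k
    rw [Algebra.smul_def, Derivation.leibniz, hpow, hext]
    simp only [smul_eq_mul, mul_smul_comm]
    ring_nf
  have key : ∑ k ∈ Finset.range (m + 1),
      (algebraMap F (AlgebraicClosure F) (δ (p.coeff k)) * α ^ k
        + (k * n) • (algebraMap F (AlgebraicClosure F) (p.coeff k) * α ^ k)) = 0 := by
    have h0 : d (Polynomial.aeval α p) = 0 := by rw [minpoly.aeval]; exact map_zero d
    rw [Polynomial.aeval_eq_sum_range, map_sum] at h0
    rw [← h0]
    exact Finset.sum_congr rfl fun k _ => (hterm k).symm
  set g : Polynomial F := ∑ k ∈ Finset.range (m + 1),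
    Polynomial.C (δ (p.coeff k) + (k * n) • p.coeff k - (m * n) • p.coeff k)
      * Polynomial.X ^ k with hg
  have hgeval : Polynomial.aeval α g = 0 := by
    have hsub : ∑ k ∈ Finset.range (m + 1),
        (m * n) • (algebraMap F (AlgebraicClosure F) (p.coeff k) * α ^ k)
        = (m * n) • Polynomial.aeval α p := by
      rw [← Finset.smul_sum, Polynomial.aeval_eq_sum_range]
      congr 1
      exact Finset.sum_congr rfl fun k _ => by rw [Algebra.smul_def]
    rw [hg, map_sum]
    calc ∑ k ∈ Finset.range (m + 1),
        Polynomial.aeval α (Polynomial.C (δ (p.coeff k) + (k * n) • p.coeff k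
          - (m * n) • p.coeff k) * Polynomial.X ^ k)
        = ∑ k ∈ Finset.range (m + 1),
          ((algebraMap F (AlgebraicClosure F) (δ (p.coeff k)) * α ^ k
            + (k * n) • (algebraMap F (AlgebraicClosure F) (p.coeff k) * α ^ k))
           - (m * n) • (algebraMap F (AlgebraicClosure F) (p.coeff k) * α ^ k)) := by
          refine Finset.sum_congr rfl fun k _ => ?_
          simp only [map_mul, Polynomial.aeval_C, Polynomial.aeval_X_pow, map_sub, map_add,
            map_nsmul]
          ring_nf
      _ = 0 := by
          rw [Finset.sum_sub_distrib, key, hsub, minpoly.aeval, smul_zero, zero_sub, neg_zero]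
  have hgc : ∀ j : ℕ, g.coeff j = if j ∈ Finset.range (m + 1) then
      δ (p.coeff j) + (j * n) • p.coeff j - (m * n) • p.coeff j else 0 := by
    intro j
    rw [hg, Polynomial.finset_sum_coeff]
    simp only [Polynomial.coeff_C_mul, Polynomial.coeff_X_pow, mul_ite, mul_one, mul_zero]
    rw [Finset.sum_ite_eq]
  have hdeg : g.degree < p.degree := by
    rw [Polynomial.degree_eq_natDegree hmonic.ne_zero, ← hm,
      Polynomial.degree_lt_iff_coeff_zero]
    intro j hj
    rw [hgc]
    split_ifs with h
    · rw [Finset.mem_range] at h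
      have hjm : j = m := le_antisymm (Nat.lt_succ_iff.mp h) (by exact_mod_cast hj)
      subst hjm
      rw [hmonic.coeff_natDegree]
      simp
    · rfl
  have hg0 : g = 0 := by
    by_contra hne
    exact absurd (minpoly.degree_le_of_ne_zero F α hne hgeval) (not_le.2 hdeg)
  have hc0 : δ (p.coeff 0) = (m * n) • p.coeff 0 := by
    have h := hgc 0
    rw [hg0, Polynomial.coeff_zero, if_pos (Finset.mem_range.2 (Nat.succ_pos m))] at h
    have := h.symm
    rw [sub_eq_zero] at this
    simpa using this
  have : p.coeff 0 = 0 := hF _ (m * n) (Nat.mul_pos hm1 hn) hc0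
  exact (minpoly.coeff_zero_eq_zero hint).mp this
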